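/- For every real parameter λ ≥ 1, the map ϱ^(λ) is admissible with the linear order ≤_XY: for all α, β, γ ∈ Ĩ with α ≤_XY β ≤_XY γ, one has ϱ^(λ)(α, β) ≤ ϱ^(λ)(α, γ) and ϱ^(λ)(β, γ) ≤ ϱ^(λ)(α, γ). -/
import Mathlib


/-- The set of intuitionistic fuzzy values (IFVs). -/
def Itilde : Set (ℝ × ℝ) :=
  {p | 0 ≤ p.1 ∧ p.1 ≤ 1 ∧ 0 ≤ p.2 ∧ p.2 ≤ 1 ∧ p.1 + p.2 ≤ 1}

/-- Score degree `s(α) = μ_α - ν_α`. -/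
def score (p : ℝ × ℝ) : ℝ := p.1 - p.2

/-- Accuracy degree `h(α) = μ_α + ν_α`. -/
def accuracy (p : ℝ × ℝ) : ℝ := p.1 + p.2

/-- The parametric distance measure `ϱ^(λ)`. -/
noncomputable def vrhoL (l : ℝ) (a b : ℝ × ℝ) : ℝ :=
  if score a ≠ score b then (1 + l * |score a - score b|) / (1 + 2 * l)
  else |accuracy a - accuracy b| / (1 + 2 * l)

/-- The Xu–Yager linear order `≤_XY`. -/
def xyLE (a b : ℝ × ℝ) : Prop :=
  score a < score b ∨ (score a = score b ∧ accuracy a ≤ accuracy b)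

/-- For ,  is admissible with : if , then
 and . -/
theorem vrhoL_admissible_xy (l : ℝ) (hl : 1 ≤ l) (a b c : ℝ × ℝ)
    (ha : a ∈ Itilde) (hb : b ∈ Itilde) (hc : c ∈ Itilde)
    (hab : xyLE a b) (hbc : xyLE b c) :
    vrhoL l a b ≤ vrhoL l a c ∧ vrhoL l b c ≤ vrhoL l a c := by
  obtain ⟨ha1, ha2, ha3, ha4, ha5⟩ := ha
  obtain ⟨hb1, hb2, hb3, hb4, hb5⟩ := hb
  obtain ⟨hc1, hc2, hc3, hc4, hc5⟩ := hc
  have hl0 : (0:ℝ) < 1 + 2 * l := by linarith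
  have hA0 : 0 ≤ accuracy a := by simp only [accuracy]; linarith
  have hA1 : accuracy a ≤ 1 := ha5
  have hB0 : 0 ≤ accuracy b := by simp only [accuracy]; linarith
  have hB1 : accuracy b ≤ 1 := hb5
  have hC0 : 0 ≤ accuracy c := by simp only [accuracy]; linarith
  have hC1 : accuracy c ≤ 1 := hc5
  unfold vrhoL
  rcases hab with h1 | ⟨h1, h1'⟩ <;> rcases hbc with h2 | ⟨h2, h2'⟩
  · -- s a < s b < s c
    have h3 : score a < score c := h1.trans h2
    rw [if_pos (ne_of_lt h1), if_pos (ne_of_lt h2), if_pos (ne_of_lt h3),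
      abs_of_nonpos (by linarith), abs_of_nonpos (by linarith),
      abs_of_nonpos (by linarith)]
    constructor <;> exact (div_le_div_iff_of_pos_right hl0).mpr (by nlinarith)
  · -- s a < s b = s c
    have h3 : score a < score c := h2 ▸ h1
    rw [if_pos (ne_of_lt h1), if_neg (not_not_intro h2), if_pos (ne_of_lt h3)]
    have habs : |accuracy b - accuracy c| ≤ 1 := abs_le.mpr ⟨by linarith, by linarith⟩
    have hmn : 0 ≤ l * |score a - score c| := mul_nonneg (by linarith) (abs_nonneg _)
    constructor
    · exact (div_le_div_iff_of_pos_right hl0).mpr (by rw [h2])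
    · exact (div_le_div_iff_of_pos_right hl0).mpr (by linarith)
  · -- s a = s b < s c
    have h3 : score a < score c := h1 ▸ h2
    rw [if_neg (not_not_intro h1), if_pos (ne_of_lt h2), if_pos (ne_of_lt h3)]
    have habs : |accuracy a - accuracy b| ≤ 1 := abs_le.mpr ⟨by linarith, by linarith⟩
    have hmn : 0 ≤ l * |score a - score c| := mul_nonneg (by linarith) (abs_nonneg _)
    constructor
    · exact (div_le_div_iff_of_pos_right hl0).mpr (by linarith)
    · exact (div_le_div_iff_of_pos_right hl0).mpr (by rw [h1])
  · -- all scores equal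
    have h3 : score a = score c := h1.trans h2
    rw [if_neg (not_not_intro h1), if_neg (not_not_intro h2), if_neg (not_not_intro h3),
      abs_of_nonpos (by linarith), abs_of_nonpos (by linarith),
      abs_of_nonpos (by linarith)]
    constructor <;> exact (div_le_div_iff_of_pos_right hl0).mpr (by linarith)
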